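/- Let C_uu, C_vv be symmetric positive definite matrices with positive-definite square roots, C_uv a cross-covariance, and let M = C_uu^{-1/2} C_uv C_vv^{-1/2}. For 0 < r ≤ min(n,m), the minimizer of A ↦ Tr(AᵀC_uu A C_vv) − Tr(A C_vu) − Tr(Aᵀ C_uv) over the set of matrices A of rank at most r is A*(r) = C_uu^{-1/2} M_r C_vv^{-1/2}, where M_r is the best rank-r approximation of M in Frobenius norm (truncated SVD). -/

import Mathlib

open Matrix

/-- The square root of a positive semidefinite matrix, as `Matrix.PosSemidef.sqrt` was defined
in the older Mathlib (removed since). -/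
noncomputable def Matrix.PosSemidef.sqrt {n : Type*} {𝕜 : Type*} [Fintype n] [DecidableEq n]
    [RCLike 𝕜] [PartialOrder 𝕜] {A : Matrix n n 𝕜} (hA : A.PosSemidef) : Matrix n n 𝕜 :=
  hA.1.eigenvectorUnitary.1 * diagonal ((↑) ∘ (Real.sqrt ∘ hA.1.eigenvalues)) *
  (star hA.1.eigenvectorUnitary : Matrix n n 𝕜)

/-- Squared Frobenius norm of a matrix. -/
noncomputable def frobSq {n m : ℕ} (X : Matrix (Fin n) (Fin m) ℝ) : ℝ := (Xᵀ * X).trace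

/-- The quadratic CLIP loss. -/
noncomputable def lossA {n m : ℕ} (Cuu : Matrix (Fin n) (Fin n) ℝ)
    (Cvv : Matrix (Fin m) (Fin m) ℝ) (Cuv : Matrix (Fin n) (Fin m) ℝ)
    (A : Matrix (Fin n) (Fin m) ℝ) : ℝ :=
  (Aᵀ * Cuu * A * Cvv).trace - (A * Cuvᵀ).trace - (Aᵀ * Cuv).trace

lemma sqrt_transpose_real {k : ℕ} {A : Matrix (Fin k) (Fin k) ℝ} (hA : A.PosSemidef) :
    (Matrix.PosSemidef.sqrt hA)ᵀ = Matrix.PosSemidef.sqrt hA := by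
  rw [← conjTranspose_eq_transpose_of_trivial]
  simp only [Matrix.PosSemidef.sqrt, conjTranspose_mul, star_eq_conjTranspose,
    conjTranspose_conjTranspose, diagonal_conjTranspose, Matrix.mul_assoc]
  congr 2

lemma sqrt_mul_self_real {k : ℕ} {A : Matrix (Fin k) (Fin k) ℝ} (hA : A.PosSemidef) :
    Matrix.PosSemidef.sqrt hA * Matrix.PosSemidef.sqrt hA = A := by
  have hU : (star hA.1.eigenvectorUnitary : Matrix (Fin k) (Fin k) ℝ) * hA.1.eigenvectorUnitary.1 = 1 :=
    Unitary.star_mul_self_of_mem hA.1.eigenvectorUnitary.2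
  conv_rhs => rw [hA.1.spectral_theorem, Unitary.conjStarAlgAut_apply]
  simp only [Matrix.PosSemidef.sqrt, Matrix.mul_assoc]
  rw [← Matrix.mul_assoc (star _ : Matrix (Fin k) (Fin k) ℝ) _ (diagonal _ * _), hU, Matrix.one_mul,
    ← Matrix.mul_assoc (diagonal _), diagonal_mul_diagonal]
  congr 2
  ext i j
  simp [diagonal_apply, Real.mul_self_sqrt (hA.eigenvalues_nonneg i)]

lemma frobSq_sub_comm {n m : ℕ} (X Y : Matrix (Fin n) (Fin m) ℝ) :
    frobSq (X - Y) = frobSq (Y - X) := by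
  have h : Y - X = -(X - Y) := (neg_sub X Y).symm
  rw [h]
  simp only [frobSq, transpose_neg, Matrix.neg_mul, Matrix.mul_neg, neg_neg]

lemma key {n m : ℕ} (Cuu S : Matrix (Fin n) (Fin n) ℝ) (Cvv T : Matrix (Fin m) (Fin m) ℝ)
    (Cuv : Matrix (Fin n) (Fin m) ℝ)
    (hSsym : Sᵀ = S) (hTsym : Tᵀ = T) (hS2 : S * S = Cuu) (hT2 : T * T = Cvv)
    (hSdet : IsUnit S.det) (hTdet : IsUnit T.det)
    (A : Matrix (Fin n) (Fin m) ℝ) :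
    lossA Cuu Cvv Cuv A
      = frobSq (S * A * T - S⁻¹ * Cuv * T⁻¹) - frobSq (S⁻¹ * Cuv * T⁻¹) := by
  have hSS : S * S⁻¹ = 1 := mul_nonsing_inv S hSdet
  have hST : T⁻¹ * T = 1 := nonsing_inv_mul T hTdet
  have hSi : (S⁻¹)ᵀ = S⁻¹ := by rw [transpose_nonsing_inv, hSsym]
  have hTi : (T⁻¹)ᵀ = T⁻¹ := by rw [transpose_nonsing_inv, hTsym]
  have hSS' : S⁻¹ * S = 1 := nonsing_inv_mul S hSdet
  have hTT : T * T⁻¹ = 1 := mul_nonsing_inv T hTdet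
  have h1 : ((S * A * T)ᵀ * (S * A * T)).trace = (Aᵀ * Cuu * A * Cvv).trace := by
    calc ((S * A * T)ᵀ * (S * A * T)).trace
        = (T * (Aᵀ * (S * (S * (A * T))))).trace := by
          simp [transpose_mul, hSsym, hTsym, Matrix.mul_assoc]
      _ = (Aᵀ * (S * (S * (A * T))) * T).trace := trace_mul_comm _ _
      _ = (Aᵀ * Cuu * A * Cvv).trace := by
          rw [← Matrix.mul_assoc S S, hS2]; simp [Matrix.mul_assoc, hT2]
  have h2 : ((S * A * T)ᵀ * (S⁻¹ * Cuv * T⁻¹)).trace = (Aᵀ * Cuv).trace := by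
    calc ((S * A * T)ᵀ * (S⁻¹ * Cuv * T⁻¹)).trace
        = (T * (Aᵀ * (S * (S⁻¹ * (Cuv * T⁻¹))))).trace := by
          simp [transpose_mul, hSsym, hTsym, Matrix.mul_assoc]
      _ = (T * (Aᵀ * (Cuv * T⁻¹))).trace := by
          rw [← Matrix.mul_assoc S S⁻¹, hSS, Matrix.one_mul]
      _ = (Aᵀ * (Cuv * T⁻¹) * T).trace := trace_mul_comm _ _
      _ = (Aᵀ * Cuv).trace := by simp [Matrix.mul_assoc, hST]
  have h3 : ((S⁻¹ * Cuv * T⁻¹)ᵀ * (S * A * T)).trace = (A * Cuvᵀ).trace := by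
    calc ((S⁻¹ * Cuv * T⁻¹)ᵀ * (S * A * T)).trace
        = (T⁻¹ * (Cuvᵀ * (S⁻¹ * (S * (A * T))))).trace := by
          simp [transpose_mul, hSi, hTi, Matrix.mul_assoc]
      _ = (T⁻¹ * (Cuvᵀ * (A * T))).trace := by
          rw [← Matrix.mul_assoc S⁻¹ S, hSS', Matrix.one_mul]
      _ = (Cuvᵀ * (A * T) * T⁻¹).trace := trace_mul_comm _ _
      _ = (Cuvᵀ * A).trace := by simp [Matrix.mul_assoc, hTT]
      _ = (A * Cuvᵀ).trace := trace_mul_comm _ _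
  simp only [lossA, frobSq, transpose_sub, Matrix.sub_mul, Matrix.mul_sub, trace_sub,
    h1, h2, h3]
  ring

/-- Rank-constrained minimizer of the quadratic CLIP loss: with
`M = Cuu^{-1/2} Cuv Cvv^{-1/2}` and `Mr` a best rank-`r` Frobenius approximation of `M`,
the matrix `A*(r) = Cuu^{-1/2} Mr Cvv^{-1/2}` minimizes the loss over rank-≤r matrices. -/
theorem stmt10 {n m : ℕ} (Cuu : Matrix (Fin n) (Fin n) ℝ) (Cvv : Matrix (Fin m) (Fin m) ℝ)
    (Cuv : Matrix (Fin n) (Fin m) ℝ) (hu : Cuu.PosDef) (hv : Cvv.PosDef)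
    (r : ℕ) (hr : 0 < r) (hrm : r ≤ min n m)
    (Mr : Matrix (Fin n) (Fin m) ℝ) (hMr_rank : Mr.rank ≤ r)
    (hMr_best : ∀ N : Matrix (Fin n) (Fin m) ℝ, N.rank ≤ r →
      frobSq ((Matrix.PosSemidef.sqrt hu.posSemidef)⁻¹ * Cuv * (Matrix.PosSemidef.sqrt hv.posSemidef)⁻¹ - Mr)
        ≤ frobSq ((Matrix.PosSemidef.sqrt hu.posSemidef)⁻¹ * Cuv * (Matrix.PosSemidef.sqrt hv.posSemidef)⁻¹ - N)) :
    ((Matrix.PosSemidef.sqrt hu.posSemidef)⁻¹ * Mr * (Matrix.PosSemidef.sqrt hv.posSemidef)⁻¹).rank ≤ r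
    ∧ ∀ A : Matrix (Fin n) (Fin m) ℝ, A.rank ≤ r →
        lossA Cuu Cvv Cuv ((Matrix.PosSemidef.sqrt hu.posSemidef)⁻¹ * Mr * (Matrix.PosSemidef.sqrt hv.posSemidef)⁻¹)
          ≤ lossA Cuu Cvv Cuv A := by
  set S := Matrix.PosSemidef.sqrt hu.posSemidef with hSdef
  set T := Matrix.PosSemidef.sqrt hv.posSemidef with hTdef
  have hSsym : Sᵀ = S := sqrt_transpose_real hu.posSemidef
  have hTsym : Tᵀ = T := sqrt_transpose_real hv.posSemidef
  have hS2 : S * S = Cuu := sqrt_mul_self_real hu.posSemidef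
  have hT2 : T * T = Cvv := sqrt_mul_self_real hv.posSemidef
  have hSdet : IsUnit S.det := by
    have : S.det * S.det = Cuu.det := by rw [← det_mul, hS2]
    have hc : Cuu.det ≠ 0 := ne_of_gt hu.det_pos
    exact isUnit_iff_ne_zero.2 (fun h => hc (by rw [← this, h, zero_mul]))
  have hTdet : IsUnit T.det := by
    have : T.det * T.det = Cvv.det := by rw [← det_mul, hT2]
    have hc : Cvv.det ≠ 0 := ne_of_gt hv.det_pos
    exact isUnit_iff_ne_zero.2 (fun h => hc (by rw [← this, h, zero_mul]))
  have hrank : (S⁻¹ * Mr * T⁻¹).rank ≤ r :=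
    le_trans (le_trans (rank_mul_le_left _ _) (rank_mul_le_right _ _)) hMr_rank
  refine ⟨hrank, fun A hA => ?_⟩
  have hMreq : S * (S⁻¹ * Mr * T⁻¹) * T = Mr := by
    rw [show S * (S⁻¹ * Mr * T⁻¹) * T = (S * S⁻¹) * Mr * (T⁻¹ * T) by
      simp [Matrix.mul_assoc]]
    rw [mul_nonsing_inv S hSdet, nonsing_inv_mul T hTdet, Matrix.one_mul, Matrix.mul_one]
  rw [key Cuu S Cvv T Cuv hSsym hTsym hS2 hT2 hSdet hTdet,
      key Cuu S Cvv T Cuv hSsym hTsym hS2 hT2 hSdet hTdet]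
  have hSATrank : (S * A * T).rank ≤ r :=
    le_trans (le_trans (rank_mul_le_left _ _) (rank_mul_le_right _ _)) hA
  have h := hMr_best (S * A * T) hSATrank
  rw [hMreq, frobSq_sub_comm Mr, frobSq_sub_comm (S * A * T)]
  linarith
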